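/- Let G = (Y, ∼) be a connected finite graph on the set of true query answers with n = |Y| vertices and graph distance dist, and assume G is distance-regular or VT⁺ (so the sphere sizes n_d = |{y' : dist(y, y') = d}| do not depend on y). Let Z be a finite set, ε > 0, and let H : Y → Z → ℝ be a channel matrix satisfying ε-differential privacy with respect to ∼. Then, for the uniform prior on Y and for every guessing function g : Z → Y (in particular the optimal one), the expected binary-gain utility satisfies U(Y, Z) = ∑_{z ∈ Z} (1/n) · H (g z) z ≤ 1 / (∑_{d=0}^{δ} n_d · exp(−ε d)), where δ is the diameter of G; equivalently ∑_{z} max_y H y z ≤ n / ∑_{j ∈ Y} exp(−ε · dist(y₀, j)) for any fixed y₀ ∈ Y. -/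

import Mathlib

open Finset
open scoped Classical


/-- A connected finite graph is distance-regular if there are intersection numbers
`b d` and `c d` such that every vertex `y` at graph distance `d` from `x` has exactly
`b d` neighbors at distance `d + 1` from `x` and exactly `c d` neighbors at distance
`d - 1` from `x`. -/
def IsDistRegular {V : Type*} [Fintype V] (G : SimpleGraph V) : Prop :=
  ∃ b c : ℕ → ℕ, ∀ x y : V, ∀ d : ℕ, G.dist x y = d →
    Nat.card {w : V // G.Adj y w ∧ G.dist x w = d + 1} = b d ∧
    Nat.card {w : V // G.Adj y w ∧ G.dist x w = d - 1} = c d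

/-- A finite graph `G` with `n` vertices is `VT⁺` if there are `n` graph automorphisms
`σ_0, …, σ_{n-1}` such that for every vertex `x` the map `i ↦ σ_i x` is a bijection onto
the vertex set. -/
def IsVTPlus {V : Type*} [Fintype V] (G : SimpleGraph V) : Prop :=
  ∃ σ : Fin (Fintype.card V) → (G ≃g G),
    ∀ x : V, Function.Bijective fun i => (σ i) x

section Aux

variable {V : Type*} [Fintype V] {G : SimpleGraph V}

/-- sphere as a finset -/
noncomputable def sph (G : SimpleGraph V) (x : V) (d : ℕ) : Finset V :=
  Finset.univ.filter fun j => G.dist x j = d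

lemma iso_dist_le (hconn : G.Connected) (φ : G ≃g G) (x y : V) :
    G.dist (φ x) (φ y) ≤ G.dist x y := by
  obtain ⟨p, hp⟩ := (hconn x y).exists_walk_length_eq_dist
  calc G.dist (φ x) (φ y) ≤ (p.map φ.toHom).length := SimpleGraph.dist_le _
    _ = G.dist x y := by rw [SimpleGraph.Walk.length_map, hp]

lemma iso_dist (hconn : G.Connected) (φ : G ≃g G) (x y : V) :
    G.dist (φ x) (φ y) = G.dist x y := by
  refine le_antisymm (iso_dist_le hconn φ x y) ?_
  have := iso_dist_le hconn φ.symm (φ x) (φ y)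
  simpa using this

lemma nat_card_filter (p : V → Prop) [DecidablePred p] :
    Nat.card {w : V // p w} = (Finset.univ.filter fun w => p w).card := by
  rw [Nat.card_eq_fintype_card, Fintype.card_subtype]

/-- double counting -/
lemma double_count (x : V) (d : ℕ) :
    ∑ y ∈ sph G x d, (Finset.univ.filter fun w => G.Adj y w ∧ G.dist x w = d + 1).card
    = ∑ w ∈ sph G x (d + 1), (Finset.univ.filter fun y => G.Adj w y ∧ G.dist x y = d).card := by
  classical
  have e1 : ∀ (e : ℕ) (P : V → V → Prop) [∀ y w, Decidable (P y w)],
      ∑ y ∈ sph G x e, (Finset.univ.filter fun w => P y w).card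
      = ∑ y : V, ∑ w : V, if G.dist x y = e ∧ P y w then 1 else 0 := by
    intro e P _
    rw [sph, Finset.sum_filter]
    refine Finset.sum_congr rfl fun y _ => ?_
    by_cases h : G.dist x y = e
    · simp only [h, if_true, eq_self_iff_true, true_and, Finset.card_filter]
    · simp [h]
  rw [e1 d (fun y w => G.Adj y w ∧ G.dist x w = d + 1),
      e1 (d + 1) (fun w y => G.Adj w y ∧ G.dist x y = d), Finset.sum_comm]
  refine Finset.sum_congr rfl fun w _ => Finset.sum_congr rfl fun y _ => ?_
  refine if_congr ?_ rfl rfl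
  constructor
  · rintro ⟨h1, h2, h3⟩; exact ⟨h3, h2.symm, h1⟩
  · rintro ⟨h1, h2, h3⟩; exact ⟨h3, h2.symm, h1⟩

lemma dist_lt_card (hconn : G.Connected) (x y : V) : G.dist x y < Fintype.card V := by
  obtain ⟨p, hp, hl⟩ := hconn.exists_path_of_dist x y
  rw [← hl]; exact hp.length_lt

lemma sphere_card_eq (hconn : G.Connected) (hreg : IsDistRegular G ∨ IsVTPlus G) :
    ∀ (d : ℕ) (x x' : V), (sph G x d).card = (sph G x' d).card := by
  rcases hreg with ⟨b, c, hbc⟩ | ⟨σ, hσ⟩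
  · intro d
    induction d with
    | zero =>
      intro x x'
      have h0 : ∀ u : V, sph G u 0 = {u} := by
        intro u; ext j
        simp only [sph, Finset.mem_filter, Finset.mem_univ, true_and, Finset.mem_singleton]
        rw [(hconn u j).dist_eq_zero_iff]; exact eq_comm
      rw [h0, h0]; simp
    | succ d ih =>
      intro x x'
      have key : ∀ u : V, (sph G u d).card * b d = (sph G u (d + 1)).card * c (d + 1) := by
        intro u
        have h1 : ∑ y ∈ sph G u d,
            (Finset.univ.filter fun w => G.Adj y w ∧ G.dist u w = d + 1).card
            = (sph G u d).card * b d := by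
          have hcongr : ∀ y ∈ sph G u d,
              (Finset.univ.filter fun w => G.Adj y w ∧ G.dist u w = d + 1).card = b d := by
            intro y hy
            have hy' : G.dist u y = d := by simpa [sph] using hy
            rw [← nat_card_filter]
            exact (hbc u y d hy').1
          rw [Finset.sum_congr rfl hcongr, Finset.sum_const, smul_eq_mul]
        have h2 : ∑ w ∈ sph G u (d + 1),
            (Finset.univ.filter fun y => G.Adj w y ∧ G.dist u y = d).card
            = (sph G u (d + 1)).card * c (d + 1) := by
          have hcongr : ∀ w ∈ sph G u (d + 1),
              (Finset.univ.filter fun y => G.Adj w y ∧ G.dist u y = d).card = c (d + 1) := by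
            intro w hw
            have hw' : G.dist u w = d + 1 := by simpa [sph] using hw
            have h := (hbc u w (d + 1) hw').2
            simp only [Nat.add_sub_cancel] at h
            rw [← nat_card_filter]
            exact h
          rw [Finset.sum_congr rfl hcongr, Finset.sum_const, smul_eq_mul]
        rw [← h1, ← h2, double_count]
      have cpos : ∀ u : V, (sph G u (d + 1)).Nonempty → 0 < c (d + 1) := by
        rintro u ⟨w, hw⟩
        have hw' : G.dist u w = d + 1 := by simpa [sph] using hw
        have hr : G.Reachable w u := (hconn w u)
        obtain ⟨p, hp⟩ := hr.exists_walk_length_eq_dist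
        rw [SimpleGraph.dist_comm, hw'] at hp
        cases p with
        | nil => simp at hp
        | cons h q =>
          rename_i y
          have hq : q.length = d := by simpa using hp
          have hdy : G.dist u y = d := by
            have hle : G.dist u y ≤ d := by
              rw [SimpleGraph.dist_comm, ← hq]; exact SimpleGraph.dist_le q
            have hge : d + 1 ≤ G.dist u y + 1 := by
              rw [← hw']
              calc G.dist u w ≤ G.dist u y + G.dist y w := hconn.dist_triangle
                _ ≤ G.dist u y + 1 := by
                    have : G.dist y w ≤ 1 := by
                      rw [SimpleGraph.dist_comm]
                      exact le_trans (SimpleGraph.dist_le h.toWalk) (by simp)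
                    omega
            omega
          have := (hbc u w (d + 1) hw').2
          simp only [Nat.add_sub_cancel] at this
          rw [← this]
          have : Nonempty {y' : V // G.Adj w y' ∧ G.dist u y' = d} := ⟨⟨y, h, hdy⟩⟩
          exact Nat.card_pos
      by_cases hc : c (d + 1) = 0
      · have hz : ∀ u : V, (sph G u (d + 1)).card = 0 := by
          intro u
          by_contra hne
          exact absurd (cpos u (Finset.card_ne_zero.mp hne)) (by omega)
        rw [hz, hz]
      · have h1 := key x
        have h2 := key x'
        rw [ih x x'] at h1
        have h3 := h2.symm.trans h1
        exact (Nat.eq_of_mul_eq_mul_right (Nat.pos_of_ne_zero hc) h3).symm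
  · intro d x x'
    obtain ⟨i, hi⟩ := (hσ x).2 x'
    refine Finset.card_bij (fun j _ => σ i j) ?_ ?_ ?_
    · intro j hj
      have : G.dist x j = d := by simpa [sph] using hj
      simp only [sph, Finset.mem_filter, Finset.mem_univ, true_and]
      rw [← hi, iso_dist hconn]; exact this
    · intro a _ b _ h
      exact (σ i).toEquiv.injective h
    · intro j' hj'
      refine ⟨(σ i).symm j', ?_, by simp⟩
      have hd : G.dist x' j' = d := by simpa [sph] using hj'
      simp only [sph, Finset.mem_filter, Finset.mem_univ, true_and]
      have := iso_dist hconn (σ i) ((σ i).symm x') ((σ i).symm j')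
      simp only [RelIso.apply_symm_apply] at this
      have hx : (σ i).symm x' = x := by rw [← hi]; simp
      rw [← hx, ← this]
      exact hd

lemma sum_over_spheres (x : V) (f : ℕ → ℝ) (hconn : G.Connected) :
    ∑ j : V, f (G.dist x j)
      = ∑ d ∈ Finset.range (Fintype.card V), ((sph G x d).card : ℝ) * f d := by
  classical
  rw [← Finset.sum_fiberwise_of_maps_to
    (fun j _ => Finset.mem_range.mpr (dist_lt_card hconn x j)) (fun j => f (G.dist x j))]
  refine Finset.sum_congr rfl fun d _ => ?_
  have hcongr : ∀ j ∈ Finset.univ.filter fun j => G.dist x j = d,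
      f (G.dist x j) = f d := by
    intro j hj
    rw [(Finset.mem_filter.mp hj).2]
  rw [Finset.sum_congr rfl hcongr, Finset.sum_const, nsmul_eq_mul]
  rfl

end Aux

/-- **bound on the utility.** Let `G` be a connected finite graph on the
set `Y` of true answers, with `n = |Y|`, which is distance-regular or `VT⁺`, and let
`H : Y → Z → ℝ` be an `ε`-differentially private channel matrix. Then for the uniform
prior on `Y`, every guessing function `g : Z → Y` has expected binary-gain utility
`∑_z (1/n) * H (g z) z ≤ 1 / ∑_j exp (-ε * dist y₀ j)` (for any fixed `y₀`);
equivalently `∑_z max_y H y z ≤ n / ∑_j exp (-ε * dist y₀ j)`. -/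
theorem dp_utility_bound {Y Z : Type*} [Fintype Y] [Fintype Z]
    (G : SimpleGraph Y) (hconn : G.Connected)
    (hreg : IsDistRegular G ∨ IsVTPlus G)
    (ε : ℝ) (hε : 0 < ε) (H : Y → Z → ℝ)
    (hnn : ∀ y z, 0 ≤ H y z) (hrow : ∀ y, ∑ z, H y z = 1)
    (hdp : ∀ y y', G.Adj y y' → ∀ z, H y z ≤ Real.exp ε * H y' z) :
    ∀ y₀ : Y,
      (∀ g : Z → Y,
        (∑ z, (1 / (Fintype.card Y : ℝ)) * H (g z) z) ≤
          1 / ∑ j, Real.exp (-ε * (G.dist y₀ j : ℝ))) ∧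
      (∑ z, ⨆ y, H y z) ≤
        (Fintype.card Y : ℝ) / ∑ j, Real.exp (-ε * (G.dist y₀ j : ℝ)) := by
  intro y₀
  haveI : Nonempty Y := ⟨y₀⟩
  set n : ℝ := (Fintype.card Y : ℝ) with hn
  set S₀ : ℝ := ∑ j, Real.exp (-ε * (G.dist y₀ j : ℝ)) with hS₀
  -- chain bound along walks
  have chain : ∀ (y j : Y) (z : Z), H y z ≤ Real.exp (ε * (G.dist y j : ℝ)) * H j z := by
    intro y j z
    have walkbound : ∀ {a b : Y} (p : G.Walk a b),
        H a z ≤ Real.exp (ε * (p.length : ℝ)) * H b z := by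
      intro a b p
      induction p with
      | nil => simp
      | cons h q ih =>
        rename_i u v w
        calc H u z ≤ Real.exp ε * H v z := hdp u v h z
          _ ≤ Real.exp ε * (Real.exp (ε * (q.length : ℝ)) * H w z) :=
              mul_le_mul_of_nonneg_left ih (le_of_lt (Real.exp_pos ε))
          _ = Real.exp (ε * (((q.length : ℝ)) + 1)) * H w z := by
              rw [mul_add, mul_one, Real.exp_add]; ring
          _ = Real.exp (ε * (((SimpleGraph.Walk.cons h q).length : ℝ))) * H w z := by
              rw [SimpleGraph.Walk.length_cons]; push_cast; ring_nf
    obtain ⟨p, hp⟩ := hconn.exists_walk_length_eq_dist y j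
    have := walkbound p
    rwa [hp] at this
  -- all sphere-sums are equal
  have hSall : ∀ x : Y, ∑ j, Real.exp (-ε * (G.dist x j : ℝ)) = S₀ := by
    intro x
    rw [hS₀]
    rw [sum_over_spheres x (fun d => Real.exp (-ε * (d : ℝ))) hconn,
        sum_over_spheres y₀ (fun d => Real.exp (-ε * (d : ℝ))) hconn]
    refine Finset.sum_congr rfl fun d _ => ?_
    rw [sphere_card_eq hconn hreg d x y₀]
  have hSpos : 0 < S₀ := by
    rw [hS₀]
    exact Finset.sum_pos (fun j _ => Real.exp_pos _) Finset.univ_nonempty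
  have hkey : ∀ (y : Y) (z : Z), H y z ≤ (∑ j, H j z) / S₀ := by
    intro y z
    rw [le_div_iff₀ hSpos]
    calc H y z * S₀ = ∑ j, Real.exp (-ε * (G.dist y j : ℝ)) * H y z := by
          rw [← hSall y, Finset.mul_sum]
          exact Finset.sum_congr rfl fun j _ => (mul_comm _ _)
      _ ≤ ∑ j, H j z := by
          refine Finset.sum_le_sum fun j _ => ?_
          have h1 := chain y j z
          have h2 : Real.exp (-ε * (G.dist y j : ℝ)) * H y z
              ≤ Real.exp (-ε * (G.dist y j : ℝ)) * (Real.exp (ε * (G.dist y j : ℝ)) * H j z) :=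
            mul_le_mul_of_nonneg_left h1 (le_of_lt (Real.exp_pos _))
          calc Real.exp (-ε * (G.dist y j : ℝ)) * H y z ≤ _ := h2
            _ = H j z := by
                rw [← mul_assoc, ← Real.exp_add]
                ring_nf
                simp
  have hnpos : 0 < n := by
    rw [hn]; exact_mod_cast Fintype.card_pos
  have htot : ∑ z : Z, ∑ j : Y, H j z = n := by
    rw [Finset.sum_comm]
    simp [hrow, hn]
  constructor
  · intro g
    calc ∑ z, (1 / n) * H (g z) z
        ≤ ∑ z, (1 / n) * ((∑ j, H j z) / S₀) := by
          refine Finset.sum_le_sum fun z _ => ?_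
          exact mul_le_mul_of_nonneg_left (hkey (g z) z) (by positivity)
      _ = (1 / n) * ((∑ z, ∑ j, H j z) / S₀) := by
          rw [← Finset.mul_sum, Finset.sum_div]
      _ = 1 / S₀ := by
          rw [htot]
          field_simp
  · calc ∑ z, ⨆ y, H y z
        ≤ ∑ z, (∑ j, H j z) / S₀ := by
          refine Finset.sum_le_sum fun z _ => ?_
          exact ciSup_le fun y => hkey y z
      _ = (∑ z, ∑ j, H j z) / S₀ := by rw [Finset.sum_div]
      _ = n / S₀ := by rw [htot]
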